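/- Let I be a dyadic interval and let U be a finite collection of dyadic subintervals of I such that every point x of I is covered by at least l intervals from U (counted with multiplicity, i.e. the sum of indicator functions of intervals in U is at least l at every point of I). Then the cardinality of U is at least 2^l - 1. -/

import Mathlib

open MeasureTheory Set

/-- The dyadic interval `Δ_j^m = [(j-1)/2^m, j/2^m)`. -/
noncomputable def dyadicI (m j : ℤ) : Set ℝ :=
  Set.Ico ((j - 1 : ℝ) / 2 ^ m) ((j : ℝ) / 2 ^ m)

lemma two_zpow_pos' (m : ℤ) : (0:ℝ) < 2 ^ m := zpow_pos (by norm_num) m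

lemma dyadicI_lt (m j : ℤ) : ((j:ℝ) - 1) / 2 ^ m < (j:ℝ) / 2 ^ m :=
  (div_lt_div_iff_of_pos_right (two_zpow_pos' m)).mpr (by linarith)

lemma dyadicI_nonempty (m j : ℤ) : (dyadicI m j).Nonempty :=
  Set.nonempty_Ico.mpr (dyadicI_lt m j)

lemma dyadicI_subset_iff (m j m0 j0 : ℤ) :
    dyadicI m j ⊆ dyadicI m0 j0 ↔
      ((j0:ℝ) - 1) / 2 ^ m0 ≤ ((j:ℝ) - 1) / 2 ^ m ∧ (j:ℝ) / 2 ^ m ≤ (j0:ℝ) / 2 ^ m0 := by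
  unfold dyadicI
  rw [Set.Ico_subset_Ico_iff (dyadicI_lt m j)]

lemma left_endpoint_eq (m0 j0 : ℤ) :
    (((2*j0 - 1 : ℤ) : ℝ) - 1) / 2 ^ (m0+1) = ((j0:ℝ) - 1) / 2 ^ m0 := by
  rw [zpow_add_one₀ (two_ne_zero)]; push_cast; field_simp; ring

lemma right_endpoint_eq (m0 j0 : ℤ) :
    ((2*j0 : ℤ) : ℝ) / 2 ^ (m0+1) = (j0:ℝ) / 2 ^ m0 := by
  rw [zpow_add_one₀ (two_ne_zero)]; push_cast; field_simp

/-- The left half of a dyadic interval is a subset. -/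
lemma left_half_subset (m0 j0 : ℤ) : dyadicI (m0+1) (2*j0 - 1) ⊆ dyadicI m0 j0 := by
  rw [dyadicI_subset_iff]
  constructor
  · rw [left_endpoint_eq]
  · rw [zpow_add_one₀ (two_ne_zero), div_le_div_iff₀ (by positivity) (by positivity)]
    push_cast
    nlinarith [two_zpow_pos' m0]

/-- The right half of a dyadic interval is a subset. -/
lemma right_half_subset (m0 j0 : ℤ) : dyadicI (m0+1) (2*j0) ⊆ dyadicI m0 j0 := by
  rw [dyadicI_subset_iff]
  constructor
  · rw [zpow_add_one₀ (two_ne_zero), div_le_div_iff₀ (by positivity) (by positivity)]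
    push_cast
    nlinarith [two_zpow_pos' m0]
  · rw [right_endpoint_eq]

/-- The two halves are disjoint. -/
lemma halves_disjoint (m0 j0 : ℤ) (x : ℝ) (h1 : x ∈ dyadicI (m0+1) (2*j0 - 1))
    (h2 : x ∈ dyadicI (m0+1) (2*j0)) : False := by
  unfold dyadicI at h1 h2
  have e : ((2*j0 : ℤ):ℝ) - 1 = ((2*j0 - 1 : ℤ):ℝ) := by push_cast; ring
  have := h1.2
  have := h2.1
  rw [e] at *
  linarith

/-- Trichotomy for dyadic subintervals: equal to the whole interval, or inside
the left half, or inside the right half. -/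
lemma dyadicI_trichotomy (m j m0 j0 : ℤ) (h : dyadicI m j ⊆ dyadicI m0 j0) :
    (m = m0 ∧ j = j0) ∨ dyadicI m j ⊆ dyadicI (m0+1) (2*j0 - 1) ∨
      dyadicI m j ⊆ dyadicI (m0+1) (2*j0) := by
  rw [dyadicI_subset_iff] at h
  obtain ⟨h1, h2⟩ := h
  have hpm : (0:ℝ) < 2 ^ m := two_zpow_pos' m
  have hpm0 : (0:ℝ) < 2 ^ m0 := two_zpow_pos' m0
  have hpm1 : (0:ℝ) < 2 ^ (m0+1) := two_zpow_pos' (m0+1)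
  have hlen : (2:ℝ) ^ (-m) ≤ 2 ^ (-m0) := by
    have h3 : (1:ℝ) / 2 ^ m ≤ 1 / 2 ^ m0 := by
      have := sub_le_sub h2 h1
      have e1 : (j:ℝ) / 2 ^ m - ((j:ℝ) - 1) / 2 ^ m = 1 / 2 ^ m := by field_simp; ring
      have e2 : (j0:ℝ) / 2 ^ m0 - ((j0:ℝ) - 1) / 2 ^ m0 = 1 / 2 ^ m0 := by field_simp; ring
      linarith
    rw [zpow_neg, zpow_neg]
    simpa [one_div] using h3
  have hm0m : m0 ≤ m := by
    have := (zpow_le_zpow_iff_right₀ (by norm_num : (1:ℝ) < 2)).mp hlen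
    omega
  rcases eq_or_lt_of_le hm0m with heq | hlt
  · left
    subst heq
    have hj1 : (j0:ℝ) ≤ j := by
      have := (div_le_div_iff_of_pos_right hpm).mp h1
      linarith
    have hj2 : (j:ℝ) ≤ j0 := (div_le_div_iff_of_pos_right hpm).mp h2
    have : j = j0 := by exact_mod_cast le_antisymm hj2 hj1
    exact ⟨rfl, this⟩
  · right
    have hm1 : m0 + 1 ≤ m := hlt
    set c : ℝ := (2 * (j0:ℝ) - 1) / 2 ^ (m0+1) with hc
    by_cases hL : (j:ℝ) / 2 ^ m ≤ c
    · left
      rw [dyadicI_subset_iff]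
      refine ⟨?_, ?_⟩
      · rw [left_endpoint_eq]; exact h1
      · push_cast
        exact hL
    · by_cases hR : c ≤ ((j:ℝ) - 1) / 2 ^ m
      · right
        rw [dyadicI_subset_iff]
        refine ⟨?_, ?_⟩
        · push_cast
          exact hR
        · rw [right_endpoint_eq]; exact h2
      · exfalso
        push_neg at hL hR
        set k : ℕ := (m - m0 - 1).toNat with hk
        have hkk : (k : ℤ) = m - m0 - 1 := Int.toNat_of_nonneg (by omega)
        set N : ℤ := (2*j0 - 1) * 2 ^ k with hN
        have hNr : (N : ℝ) = c * 2 ^ m := by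
          have e1 : ((2:ℝ)) ^ (m - m0 - 1) = 2 ^ m / 2 ^ (m0+1) := by
            rw [show m - m0 - 1 = m - (m0+1) by ring, zpow_sub₀ (two_ne_zero)]
          have e2 : ((2:ℝ)) ^ (k:ℤ) = 2 ^ m / 2 ^ (m0+1) := by rw [hkk]; exact e1
          push_cast [hN]
          rw [show ((2:ℝ)) ^ (k:ℕ) = ((2:ℝ)) ^ ((k:ℤ)) by rw [zpow_natCast], e2, hc]
          field_simp
          try ring
        have hlt1 : (j:ℝ) - 1 < N := by
          rw [hNr]
          calc (j:ℝ) - 1 = (((j:ℝ) - 1) / 2 ^ m) * 2 ^ m := by field_simp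
            _ < c * 2 ^ m := mul_lt_mul_of_pos_right hR hpm
        have hlt2 : (N:ℝ) < j := by
          rw [hNr]
          calc c * 2 ^ m < ((j:ℝ) / 2 ^ m) * 2 ^ m := mul_lt_mul_of_pos_right hL hpm
            _ = (j:ℝ) := by field_simp
        have h1' : j - 1 < N := by exact_mod_cast hlt1
        have h2' : N < j := by exact_mod_cast hlt2
        omega

lemma indicator_le_one' (s : Set ℝ) (x : ℝ) : s.indicator (fun _ => (1:ℝ)) x ≤ 1 := by
  classical
  rw [Set.indicator_apply]
  split <;> norm_num

lemma indicator_nonneg' (s : Set ℝ) (x : ℝ) : 0 ≤ s.indicator (fun _ => (1:ℝ)) x :=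
  Set.indicator_nonneg (fun _ _ => zero_le_one) x

lemma key_lemma : ∀ (n : ℕ) (m0 j0 : ℤ) (l : ℕ) (U : Finset (ℤ × ℤ)),
    U.card = n →
    (∀ p ∈ U, dyadicI p.1 p.2 ⊆ dyadicI m0 j0) →
    (∀ x ∈ dyadicI m0 j0,
      (l : ℝ) ≤ ∑ p ∈ U, (dyadicI p.1 p.2).indicator (fun _ => (1 : ℝ)) x) →
    2 ^ l - 1 ≤ U.card := by
  intro n
  induction n using Nat.strong_induction_on with
  | _ n IH =>
    intro m0 j0 l U hn hsub hcov
    cases l with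
    | zero => simp
    | succ l =>
      classical
      set V : Finset (ℤ × ℤ) := U.erase (m0, j0) with hV
      set UL : Finset (ℤ × ℤ) :=
        V.filter (fun p => dyadicI p.1 p.2 ⊆ dyadicI (m0+1) (2*j0 - 1)) with hUL
      set UR : Finset (ℤ × ℤ) :=
        V.filter (fun p => dyadicI p.1 p.2 ⊆ dyadicI (m0+1) (2*j0)) with hUR
      -- sums over V localize to UL on the left half
      have hsumL : ∀ x ∈ dyadicI (m0+1) (2*j0 - 1),
          ∑ p ∈ UL, (dyadicI p.1 p.2).indicator (fun _ => (1 : ℝ)) x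
            = ∑ p ∈ V, (dyadicI p.1 p.2).indicator (fun _ => (1 : ℝ)) x := by
        intro x hx
        apply Finset.sum_filter_of_ne
        intro p hp hne
        have hxp : x ∈ dyadicI p.1 p.2 := by
          by_contra hxp
          exact hne (Set.indicator_of_notMem hxp _)
        have hpne : p ≠ (m0, j0) := (Finset.mem_erase.mp hp).1
        have hpU : p ∈ U := (Finset.mem_erase.mp hp).2
        rcases dyadicI_trichotomy p.1 p.2 m0 j0 (hsub p hpU) with ⟨he1, he2⟩ | hL | hR
        · exact absurd (Prod.ext he1 he2) hpne
        · exact hL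
        · exact absurd (halves_disjoint m0 j0 x hx (hR hxp)) not_false
      have hsumR : ∀ x ∈ dyadicI (m0+1) (2*j0),
          ∑ p ∈ UR, (dyadicI p.1 p.2).indicator (fun _ => (1 : ℝ)) x
            = ∑ p ∈ V, (dyadicI p.1 p.2).indicator (fun _ => (1 : ℝ)) x := by
        intro x hx
        apply Finset.sum_filter_of_ne
        intro p hp hne
        have hxp : x ∈ dyadicI p.1 p.2 := by
          by_contra hxp
          exact hne (Set.indicator_of_notMem hxp _)
        have hpne : p ≠ (m0, j0) := (Finset.mem_erase.mp hp).1
        have hpU : p ∈ U := (Finset.mem_erase.mp hp).2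
        rcases dyadicI_trichotomy p.1 p.2 m0 j0 (hsub p hpU) with ⟨he1, he2⟩ | hL | hR
        · exact absurd (Prod.ext he1 he2) hpne
        · exact absurd (halves_disjoint m0 j0 x (hL hxp) hx) not_false
        · exact hR
      have hsubL : ∀ p ∈ UL, dyadicI p.1 p.2 ⊆ dyadicI (m0+1) (2*j0 - 1) :=
        fun p hp => (Finset.mem_filter.mp hp).2
      have hsubR : ∀ p ∈ UR, dyadicI p.1 p.2 ⊆ dyadicI (m0+1) (2*j0) :=
        fun p hp => (Finset.mem_filter.mp hp).2
      have hdisj : Disjoint UL UR := by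
        rw [Finset.disjoint_left]
        intro p hpL hpR
        obtain ⟨x, hx⟩ := dyadicI_nonempty p.1 p.2
        exact halves_disjoint m0 j0 x ((Finset.mem_filter.mp hpL).2 hx)
          ((Finset.mem_filter.mp hpR).2 hx)
      have hULV : UL ⊆ V := Finset.filter_subset _ _
      have hURV : UR ⊆ V := Finset.filter_subset _ _
      have hVU : V ⊆ U := Finset.erase_subset _ _
      have hcardLR : UL.card + UR.card ≤ V.card := by
        rw [← Finset.card_union_of_disjoint hdisj]
        exact Finset.card_le_card (Finset.union_subset hULV hURV)
      have hpow : (2:ℕ) ^ (l+1) = 2 ^ l + 2 ^ l := by ring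
      by_cases hI0 : (m0, j0) ∈ U
      · -- the whole interval belongs to U; halves are covered l times by V
        have hcovL : ∀ x ∈ dyadicI (m0+1) (2*j0 - 1),
            (l : ℝ) ≤ ∑ p ∈ UL, (dyadicI p.1 p.2).indicator (fun _ => (1 : ℝ)) x := by
          intro x hx
          have h0 := hcov x (left_half_subset m0 j0 hx)
          push_cast at h0
          have hsplit := Finset.add_sum_erase U
            (fun p => (dyadicI p.1 p.2).indicator (fun _ => (1 : ℝ)) x) hI0
          have hle1 := indicator_le_one' (dyadicI m0 j0) x
          rw [hsumL x hx]
          rw [← hV] at hsplit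
          simp only at hsplit
          linarith
        have hcovR : ∀ x ∈ dyadicI (m0+1) (2*j0),
            (l : ℝ) ≤ ∑ p ∈ UR, (dyadicI p.1 p.2).indicator (fun _ => (1 : ℝ)) x := by
          intro x hx
          have h0 := hcov x (right_half_subset m0 j0 hx)
          push_cast at h0
          have hsplit := Finset.add_sum_erase U
            (fun p => (dyadicI p.1 p.2).indicator (fun _ => (1 : ℝ)) x) hI0
          have hle1 := indicator_le_one' (dyadicI m0 j0) x
          rw [hsumR x hx]
          rw [← hV] at hsplit
          simp only at hsplit
          linarith
        have hVcard : V.card = n - 1 := by rw [hV, Finset.card_erase_of_mem hI0, hn]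
        have hn1 : 1 ≤ n := by
          rw [← hn]
          exact Finset.card_pos.mpr ⟨(m0, j0), hI0⟩
        have hLlt : UL.card < n := lt_of_le_of_lt (le_trans (Finset.card_le_card hULV)
          (by omega : V.card ≤ n - 1)) (by omega)
        have hRlt : UR.card < n := lt_of_le_of_lt (le_trans (Finset.card_le_card hURV)
          (by omega : V.card ≤ n - 1)) (by omega)
        have hIHL := IH UL.card hLlt (m0+1) (2*j0 - 1) l UL rfl hsubL hcovL
        have hIHR := IH UR.card hRlt (m0+1) (2*j0) l UR rfl hsubR hcovR
        have : n - 1 = V.card := hVcard.symm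
        rw [hn] at *
        omega
      · -- the whole interval is not in U, so V = U and the left family already works
        have hVeq : V = U := Finset.erase_eq_of_notMem hI0
        have hcovL : ∀ x ∈ dyadicI (m0+1) (2*j0 - 1),
            ((l+1 : ℕ) : ℝ) ≤ ∑ p ∈ UL, (dyadicI p.1 p.2).indicator (fun _ => (1 : ℝ)) x := by
          intro x hx
          rw [hsumL x hx, hVeq]
          exact hcov x (left_half_subset m0 j0 hx)
        -- UR is nonempty
        have hURne : UR.Nonempty := by
          obtain ⟨x, hx⟩ := dyadicI_nonempty (m0+1) (2*j0)
          rcases Finset.eq_empty_or_nonempty UR with he | hne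
          · exfalso
            have h0 := hcov x (right_half_subset m0 j0 hx)
            rw [← hVeq, ← hsumR x hx, he, Finset.sum_empty] at h0
            push_cast at h0
            linarith
          · exact hne
        have hLlt : UL.card < n := by
          have h1 : 1 ≤ UR.card := Finset.card_pos.mpr hURne
          have h2 : V.card = n := by rw [hVeq, hn]
          omega
        have hIHL := IH UL.card hLlt (m0+1) (2*j0 - 1) (l+1) UL rfl hsubL hcovL
        have : UL.card ≤ U.card := le_trans (Finset.card_le_card hULV)
          (Finset.card_le_card hVU)
        omega

theorem stmt_0 (m0 j0 : ℤ) (l : ℕ) (U : Finset (ℤ × ℤ))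
    (hsub : ∀ p ∈ U, dyadicI p.1 p.2 ⊆ dyadicI m0 j0)
    (hcov : ∀ x ∈ dyadicI m0 j0,
      (l : ℝ) ≤ ∑ p ∈ U, (dyadicI p.1 p.2).indicator (fun _ => (1 : ℝ)) x) :
    2 ^ l - 1 ≤ U.card := by
  exact key_lemma U.card m0 j0 l U rfl hsub hcov
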